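/- Consider the cubature approximation of the spatial delayed SIR model: let Ω ⊂ ℝ² be a bounded open connected set, b, c, σ, δ > 0, 𝒯 > 0, W : ℝ² → ℝ continuous, nonnegative and bounded, and let w₁,…,w_p > 0 be positive weights and (η₁,ξ₁),…,(η_p,ξ_p) points of the open ball B_δ(0) ⊂ ℝ². Suppose S, I, R : [−σ, 𝒯] × ℝ² → ℝ are such that I(t,·) vanishes outside Ω for every t, the maps (t,x,y) ↦ S, I, R are continuous on [−σ, 𝒯] × Ω, and for every (x,y) ∈ Ω and t ∈ (0, 𝒯] the time derivatives exist and satisfy ∂ₜS(t,x,y) = −S(t,x,y)·ℱ_I(t−σ,x,y) − c·S(t,x,y), ∂ₜI(t,x,y) = S(t,x,y)·ℱ_I(t−σ,x,y) − b·I(t,x,y), ∂ₜR(t,x,y) = b·I(t,x,y) + c·S(t,x,y), where ℱ_I(t,x,y) = Σ_{i=1}^{p} w_i·W(x+η_i, y+ξ_i)·I(t, x+η_i, y+ξ_i). Assume the history satisfies, for every (x,y) ∈ Ω: S(t,x,y), I(t,x,y), R(t,x,y) ≥ 0 for all t ∈ [−σ,0]; t ↦ S(t,x,y)+I(t,x,y)+R(t,x,y)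 is constant on [−σ,0]; t ↦ S(t,x,y) is nonincreasing and t ↦ R(t,x,y) is nondecreasing on [−σ,0]. Then for every (x,y) ∈ Ω: S(t,x,y), I(t,x,y), R(t,x,y) ≥ 0 for all t ∈ [0,𝒯]; S(t,x,y)+I(t,x,y)+R(t,x,y) = S(0,x,y)+I(0,x,y)+R(0,x,y) for all t ∈ [0,𝒯]; t ↦ S(t,x,y) is nonincreasing on [0,𝒯]; and t ↦ R(t,x,y) is nondecreasing on [0,𝒯]. -/
import Mathlib

private lemma monoHelper {f g : ℝ → ℝ} {a b : ℝ}
    (hcont : ContinuousOn f (Set.Icc a b))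
    (hder : ∀ t ∈ Set.Ioo a b, HasDerivAt f (g t) t)
    (hge : ∀ t ∈ Set.Ioo a b, 0 ≤ g t) :
    MonotoneOn f (Set.Icc a b) := by
  apply monotoneOn_of_deriv_nonneg (convex_Icc a b) hcont
  · rw [interior_Icc]
    exact fun t ht => (hder t ht).differentiableAt.differentiableWithinAt
  · rw [interior_Icc]
    intro t ht
    rw [(hder t ht).deriv]
    exact hge t ht

private lemma antiHelper {f g : ℝ → ℝ} {a b : ℝ}
    (hcont : ContinuousOn f (Set.Icc a b))
    (hder : ∀ t ∈ Set.Ioo a b, HasDerivAt f (g t) t)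
    (hle : ∀ t ∈ Set.Ioo a b, g t ≤ 0) :
    AntitoneOn f (Set.Icc a b) := by
  apply antitoneOn_of_deriv_nonpos (convex_Icc a b) hcont
  · rw [interior_Icc]
    exact fun t ht => (hder t ht).differentiableAt.differentiableWithinAt
  · rw [interior_Icc]
    intro t ht
    rw [(hder t ht).deriv]
    exact hle t ht

theorem stmt_18
    (Ω : Set (EuclideanSpace ℝ (Fin 2)))
    (hΩo : IsOpen Ω) (hΩb : Bornology.IsBounded Ω) (hΩc : IsConnected Ω)
    (b c σ δ T : ℝ) (hb : 0 < b) (hc : 0 < c) (hσ : 0 < σ) (hδ : 0 < δ) (hT : 0 < T)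
    (W : EuclideanSpace ℝ (Fin 2) → ℝ)
    (hWc : Continuous W) (hWnn : ∀ z, 0 ≤ W z) (hWb : ∃ C, ∀ z, W z ≤ C)
    (p : ℕ) (w : Fin p → ℝ) (hw : ∀ i, 0 < w i)
    (η : Fin p → EuclideanSpace ℝ (Fin 2))
    (hη : ∀ i, η i ∈ Metric.ball (0 : EuclideanSpace ℝ (Fin 2)) δ)
    (S I R : ℝ → EuclideanSpace ℝ (Fin 2) → ℝ)
    (hIout : ∀ t, ∀ z ∉ Ω, I t z = 0)
    (hScont : ContinuousOn (fun q : ℝ × EuclideanSpace ℝ (Fin 2) => S q.1 q.2)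
      (Set.Icc (-σ) T ×ˢ Ω))
    (hIcont : ContinuousOn (fun q : ℝ × EuclideanSpace ℝ (Fin 2) => I q.1 q.2)
      (Set.Icc (-σ) T ×ˢ Ω))
    (hRcont : ContinuousOn (fun q : ℝ × EuclideanSpace ℝ (Fin 2) => R q.1 q.2)
      (Set.Icc (-σ) T ×ˢ Ω))
    (hdS : ∀ z ∈ Ω, ∀ t ∈ Set.Ioc 0 T,
      HasDerivWithinAt (fun t => S t z)
        (-(S t z) * (∑ i, w i * W (z + η i) * I (t - σ) (z + η i)) - c * S t z)
        (Set.Icc (-σ) T) t)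
    (hdI : ∀ z ∈ Ω, ∀ t ∈ Set.Ioc 0 T,
      HasDerivWithinAt (fun t => I t z)
        (S t z * (∑ i, w i * W (z + η i) * I (t - σ) (z + η i)) - b * I t z)
        (Set.Icc (-σ) T) t)
    (hdR : ∀ z ∈ Ω, ∀ t ∈ Set.Ioc 0 T,
      HasDerivWithinAt (fun t => R t z)
        (b * I t z + c * S t z) (Set.Icc (-σ) T) t)
    (hist_nn : ∀ z ∈ Ω, ∀ t ∈ Set.Icc (-σ) 0, 0 ≤ S t z ∧ 0 ≤ I t z ∧ 0 ≤ R t z)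
    (hist_sum : ∀ z ∈ Ω, ∀ t ∈ Set.Icc (-σ) 0,
      S t z + I t z + R t z = S 0 z + I 0 z + R 0 z)
    (hist_S : ∀ z ∈ Ω, AntitoneOn (fun t => S t z) (Set.Icc (-σ) 0))
    (hist_R : ∀ z ∈ Ω, MonotoneOn (fun t => R t z) (Set.Icc (-σ) 0)) :
    ∀ z ∈ Ω,
      (∀ t ∈ Set.Icc 0 T, 0 ≤ S t z ∧ 0 ≤ I t z ∧ 0 ≤ R t z) ∧
      (∀ t ∈ Set.Icc 0 T, S t z + I t z + R t z = S 0 z + I 0 z + R 0 z) ∧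
      AntitoneOn (fun t => S t z) (Set.Icc 0 T) ∧
      MonotoneOn (fun t => R t z) (Set.Icc 0 T) := by
  have hσT : (-σ : ℝ) ≤ T := by linarith
  have h0mem : (0:ℝ) ∈ Set.Icc (-σ) T := ⟨by linarith, hT.le⟩
  have h0mem' : (0:ℝ) ∈ Set.Icc (-σ) (0:ℝ) := ⟨by linarith, le_refl 0⟩
  -- continuity in time for fixed spatial point
  have hcomp : ∀ z ∈ Ω, ∀ (f : ℝ → EuclideanSpace ℝ (Fin 2) → ℝ),
      ContinuousOn (fun q : ℝ × EuclideanSpace ℝ (Fin 2) => f q.1 q.2)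
        (Set.Icc (-σ) T ×ˢ Ω) → ContinuousOn (fun t => f t z) (Set.Icc (-σ) T) := by
    intro z hz f hf
    exact hf.comp ((continuous_id.prodMk continuous_const).continuousOn)
      (fun t ht => Set.mk_mem_prod ht hz)
  have hIcont' : ∀ z, ContinuousOn (fun t => I t z) (Set.Icc (-σ) T) := by
    intro z
    by_cases hz : z ∈ Ω
    · exact hcomp z hz I hIcont
    · have : (fun t => I t z) = fun _ => 0 := funext fun t => hIout t z hz
      rw [this]; exact continuousOn_const
  -- the cubature functional
  set F : EuclideanSpace ℝ (Fin 2) → ℝ → ℝ :=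
    fun z t => ∑ i, w i * W (z + η i) * I t (z + η i) with hFdef
  have hFcont : ∀ z, ContinuousOn (F z) (Set.Icc (-σ) T) := by
    intro z
    apply continuousOn_finset_sum
    intro i _
    exact continuousOn_const.mul (hIcont' (z + η i))
  -- nonnegativity of S
  have hSnn : ∀ z ∈ Ω, ∀ t ∈ Set.Icc 0 T, 0 ≤ S t z := by
    intro z hz t ht
    set cl : ℝ → ℝ := fun s => max (-σ) (min s T) with hcldef
    have hclmem : ∀ s, cl s ∈ Set.Icc (-σ) T :=
      fun s => ⟨le_max_left _ _, max_le hσT (min_le_right s T)⟩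
    have hcl : Continuous cl := by
      apply continuous_const.max (continuous_id.min continuous_const)
    set g : ℝ → ℝ := fun s => F z (cl (s - σ)) + c with hgdef
    have hgc : Continuous g := by
      apply Continuous.add _ continuous_const
      exact (hFcont z).comp_continuous (hcl.comp (continuous_id.sub continuous_const))
        (fun s => hclmem _)
    set G : ℝ → ℝ := fun u => ∫ s in (0:ℝ)..u, g s with hGdef
    have hG : ∀ u, HasDerivAt G (g u) u :=
      fun u => (hgc.integral_hasStrictDerivAt 0 u).hasDerivAt
    have hGc : Continuous G :=
      Differentiable.continuous (fun u => (hG u).differentiableAt)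
    set u : ℝ → ℝ := fun s => Real.exp (G s) * S s z with hudef
    have hucont : ContinuousOn u (Set.Icc 0 T) := by
      apply ContinuousOn.mul
      · exact (Real.continuous_exp.comp hGc).continuousOn
      · exact (hcomp z hz S hScont).mono (Set.Icc_subset_Icc (by linarith) le_rfl)
    have huder : ∀ s ∈ Set.Ioo (0:ℝ) T, HasDerivAt u 0 s := by
      intro s hs
      have hS' := (hdS z hz s ⟨hs.1, hs.2.le⟩).hasDerivAt
        (Icc_mem_nhds (by linarith [hs.1]) hs.2)
      have hprod := ((hG s).exp.mul hS')
      have hcleq : cl (s - σ) = s - σ := by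
        rw [hcldef]
        simp only
        rw [min_eq_left (by linarith [hs.2] : s - σ ≤ T),
          max_eq_right (by linarith [hs.1] : -σ ≤ s - σ)]
      have hval : Real.exp (G s) * g s * S s z +
          Real.exp (G s) * (-(S s z) * F z (s - σ) - c * S s z) = 0 := by
        rw [hgdef]; simp only; rw [hcleq]; ring
      rw [hval] at hprod
      exact hprod
    have hmono : MonotoneOn u (Set.Icc 0 T) :=
      monoHelper (g := fun _ => 0) hucont huder (fun _ _ => le_refl 0)
    have hanti : AntitoneOn u (Set.Icc 0 T) :=
      antiHelper (g := fun _ => 0) hucont huder (fun _ _ => le_refl 0)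
    have h0T : (0:ℝ) ∈ Set.Icc (0:ℝ) T := ⟨le_refl 0, hT.le⟩
    have hu0 : u 0 = S 0 z := by
      rw [hudef]; simp only; rw [hGdef]; simp [intervalIntegral.integral_same]
    have hueq : u t = u 0 := le_antisymm (hanti h0T ht ht.1) (hmono h0T ht ht.1)
    have hS0 : 0 ≤ S 0 z := (hist_nn z hz 0 h0mem').1
    have hut : 0 ≤ Real.exp (G t) * S t z := by
      have : 0 ≤ u t := by rw [hueq, hu0]; exact hS0
      exact this
    by_contra hneg
    push_neg at hneg
    have := mul_neg_of_pos_of_neg (Real.exp_pos (G t)) hneg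
    linarith
  -- nonnegativity of I, by induction on delay steps
  have hInn : ∀ n : ℕ, ∀ z', ∀ t ∈ Set.Icc (-σ) (min ((n:ℝ) * σ) T), 0 ≤ I t z' := by
    intro n
    induction n with
    | zero =>
      intro z' t ht
      by_cases hz : z' ∈ Ω
      · refine (hist_nn z' hz t ⟨ht.1, ?_⟩).2.1
        have := ht.2
        simpa using le_trans this (min_le_left _ _)
      · rw [hIout t z' hz]
    | succ n ih =>
      intro z' t ht
      by_cases hz : z' ∈ Ω
      · have ha0 : 0 ≤ min ((n:ℝ) * σ) T :=
          le_min (mul_nonneg (Nat.cast_nonneg n) hσ.le) hT.le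
        have hcast : ((n+1 : ℕ) : ℝ) * σ = (n:ℝ) * σ + σ := by push_cast; ring
        have ht2 : t ≤ min ((n:ℝ) * σ + σ) T := by
          have := ht.2; rwa [hcast] at this
        rcases le_or_gt t (min ((n:ℝ) * σ) T) with h | h
        · exact ih z' t ⟨ht.1, h⟩
        · set a := min ((n:ℝ) * σ) T with hadef
          set a' := min ((n:ℝ) * σ + σ) T with ha'def
          have haa' : a ≤ a' := min_le_min (by linarith) le_rfl
          have ha'1 : a' ≤ (n:ℝ) * σ + σ := min_le_left _ _
          have ha'2 : a' ≤ T := min_le_right _ _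
          have hsub : Set.Icc a a' ⊆ Set.Icc (-σ) T :=
            Set.Icc_subset_Icc (by linarith) ha'2
          have hmono : MonotoneOn (fun s => Real.exp (b * s) * I s z') (Set.Icc a a') := by
            apply monoHelper (g := fun s => Real.exp (b * s) * (S s z' * F z' (s - σ)))
            · exact ((Real.continuous_exp.comp (continuous_const.mul continuous_id)).continuousOn).mul
                ((hIcont' z').mono hsub)
            · intro s hs
              have hs0 : 0 < s := lt_of_le_of_lt ha0 hs.1
              have hsT : s ≤ T := le_trans hs.2.le ha'2
              have hI' := (hdI z' hz s ⟨hs0, hsT⟩).hasDerivAt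
                (Icc_mem_nhds (by linarith) (lt_of_lt_of_le hs.2 ha'2))
              have hbs : HasDerivAt (fun s => Real.exp (b * s)) (Real.exp (b * s) * (b * 1)) s :=
                ((hasDerivAt_id s).const_mul b).exp
              have hprod := hbs.mul hI'
              have hval : Real.exp (b * s) * (b * 1) * I s z' +
                  Real.exp (b * s) * (S s z' * F z' (s - σ) - b * I s z') =
                  Real.exp (b * s) * (S s z' * F z' (s - σ)) := by ring
              rw [hval] at hprod
              exact hprod
            · intro s hs
              have hs0 : 0 < s := lt_of_le_of_lt ha0 hs.1
              have hsT : s ≤ T := le_trans hs.2.le ha'2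
              apply mul_nonneg (Real.exp_pos _).le
              apply mul_nonneg (hSnn z' hz s ⟨hs0.le, hsT⟩)
              apply Finset.sum_nonneg
              intro i _
              apply mul_nonneg (mul_nonneg (hw i).le (hWnn _))
              apply ih (z' + η i) (s - σ)
              constructor
              · linarith
              · refine le_min (by nlinarith [hs.2.le, ha'1]) ?_
                linarith
          have hIa : 0 ≤ I a z' := ih z' a ⟨by linarith, le_rfl⟩
          have hva : 0 ≤ Real.exp (b * a) * I a z' :=
            mul_nonneg (Real.exp_pos _).le hIa
          have hle := hmono (Set.left_mem_Icc.mpr haa') ⟨h.le, ht2⟩ h.le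
          have hvt : 0 ≤ Real.exp (b * t) * I t z' := le_trans hva hle
          by_contra hneg
          push_neg at hneg
          have := mul_neg_of_pos_of_neg (Real.exp_pos (b * t)) hneg
          linarith
      · rw [hIout t z' hz]
  have hInnT : ∀ z', ∀ t ∈ Set.Icc (-σ) T, 0 ≤ I t z' := by
    intro z' t ht
    obtain ⟨n, hn⟩ := exists_nat_ge (T / σ)
    have hTn : T ≤ (n:ℝ) * σ := by
      rw [div_le_iff₀ hσ] at hn; linarith
    have : min ((n:ℝ) * σ) T = T := min_eq_right hTn
    exact hInn n z' t (by rw [this]; exact ht)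
  -- F nonnegativity at delayed times
  have hFnn : ∀ z', ∀ s ∈ Set.Ioo (0:ℝ) T, 0 ≤ F z' (s - σ) := by
    intro z' s hs
    apply Finset.sum_nonneg
    intro i _
    apply mul_nonneg (mul_nonneg (hw i).le (hWnn _))
    exact hInnT (z' + η i) (s - σ) ⟨by linarith [hs.1], by linarith [hs.2]⟩
  intro z hz
  have hsub0T : Set.Icc (0:ℝ) T ⊆ Set.Icc (-σ) T := Set.Icc_subset_Icc (by linarith) le_rfl
  have hScz : ContinuousOn (fun t => S t z) (Set.Icc (-σ) T) := hcomp z hz S hScont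
  have hRcz : ContinuousOn (fun t => R t z) (Set.Icc (-σ) T) := hcomp z hz R hRcont
  -- R monotone
  have hRmono : MonotoneOn (fun t => R t z) (Set.Icc 0 T) := by
    apply monoHelper (g := fun s => b * I s z + c * S s z)
    · exact hRcz.mono hsub0T
    · intro s hs
      exact (hdR z hz s ⟨hs.1, hs.2.le⟩).hasDerivAt
        (Icc_mem_nhds (by linarith [hs.1]) hs.2)
    · intro s hs
      have hI : 0 ≤ I s z := hInnT z s ⟨by linarith [hs.1], hs.2.le⟩
      have hS : 0 ≤ S s z := hSnn z hz s ⟨hs.1.le, hs.2.le⟩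
      have := mul_nonneg hb.le hI
      have := mul_nonneg hc.le hS
      linarith
  -- S antitone
  have hSanti : AntitoneOn (fun t => S t z) (Set.Icc 0 T) := by
    apply antiHelper (g := fun s => -(S s z) * F z (s - σ) - c * S s z)
    · exact hScz.mono hsub0T
    · intro s hs
      exact (hdS z hz s ⟨hs.1, hs.2.le⟩).hasDerivAt
        (Icc_mem_nhds (by linarith [hs.1]) hs.2)
    · intro s hs
      have hS : 0 ≤ S s z := hSnn z hz s ⟨hs.1.le, hs.2.le⟩
      have hF : 0 ≤ F z (s - σ) := hFnn z s hs
      have h1 := mul_nonneg hS hF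
      have h2 := mul_nonneg hc.le hS
      nlinarith
  -- sum conservation
  have hsum : ∀ t ∈ Set.Icc 0 T, S t z + I t z + R t z = S 0 z + I 0 z + R 0 z := by
    have hcont : ContinuousOn (fun t => S t z + I t z + R t z) (Set.Icc 0 T) :=
      (((hScz.add (hIcont' z)).add hRcz).mono hsub0T)
    have hder : ∀ s ∈ Set.Ioo (0:ℝ) T,
        HasDerivAt (fun t => S t z + I t z + R t z) 0 s := by
      intro s hs
      have hmem : s ∈ Set.Ioc (0:ℝ) T := ⟨hs.1, hs.2.le⟩
      have hnh : Set.Icc (-σ) T ∈ nhds s := Icc_mem_nhds (by linarith [hs.1]) hs.2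
      have hS' := (hdS z hz s hmem).hasDerivAt hnh
      have hI' := (hdI z hz s hmem).hasDerivAt hnh
      have hR' := (hdR z hz s hmem).hasDerivAt hnh
      have hprod := (hS'.add hI').add hR'
      have hval : -(S s z) * (∑ i, w i * W (z + η i) * I (s - σ) (z + η i)) - c * S s z +
          (S s z * (∑ i, w i * W (z + η i) * I (s - σ) (z + η i)) - b * I s z) +
          (b * I s z + c * S s z) = 0 := by ring
      rw [hval] at hprod
      exact hprod
    have hmono := monoHelper (g := fun _ => 0) hcont hder (fun _ _ => le_refl 0)
    have hanti := antiHelper (g := fun _ => 0) hcont hder (fun _ _ => le_refl 0)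
    intro t ht
    have h0T : (0:ℝ) ∈ Set.Icc (0:ℝ) T := ⟨le_refl 0, hT.le⟩
    exact le_antisymm (hanti h0T ht ht.1) (hmono h0T ht ht.1)
  refine ⟨?_, hsum, hSanti, hRmono⟩
  intro t ht
  refine ⟨hSnn z hz t ht, hInnT z t (hsub0T ht), ?_⟩
  have hR0 : 0 ≤ R 0 z := (hist_nn z hz 0 h0mem').2.2
  have h0T : (0:ℝ) ∈ Set.Icc (0:ℝ) T := ⟨le_refl 0, hT.le⟩
  exact le_trans hR0 (hRmono h0T ht ht.1)
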